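/- Let ℂ be a constant totally symmetric fourth-order tensor, u, w be C² vector fields solving div(ℂ∇u) = 0 and div(ℂ∇w) = 0 on Ω\Γ, and 𝒰 a C¹ vector field. Define b = ((𝒰·∇)w)ᵀ ℂ[∇u] + ((𝒰·∇)u)ᵀ ℂ[∇w] − (ℂ[∇u] : ∇w) 𝒰. Then pointwise in Ω\Γ: div b = ℂ[∇u] : (∇w D𝒰) + ℂ[∇u D𝒰] : ∇w − (div 𝒰)(ℂ[∇u] : ∇w). -/

import Mathlib

/-- Partial derivative `∂_j f` of a scalar field on `ℝ^d`. -/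
noncomputable def pd {d : ℕ} (f : (Fin d → ℝ) → ℝ) (j : Fin d) (x : Fin d → ℝ) : ℝ :=
  fderiv ℝ f x (Pi.single j 1)

/-- Gradient matrix of a vector field: `(∇v)^i_j = ∂_j v^i`. -/
noncomputable def gradM {d : ℕ} (v : (Fin d → ℝ) → Fin d → ℝ) (x : Fin d → ℝ) :
    Fin d → Fin d → ℝ :=
  fun i j => pd (fun y => v y i) j x

/-- Action of a fourth-order tensor on a matrix. -/
noncomputable def tApply {d : ℕ} (C : Fin d → Fin d → Fin d → Fin d → ℝ)
    (A : Fin d → Fin d → ℝ) : Fin d → Fin d → ℝ :=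
  fun a b => ∑ c, ∑ e, C a b c e * A c e

/-- Frobenius inner product of matrices. -/
def mdot {d : ℕ} (A B : Fin d → Fin d → ℝ) : ℝ := ∑ a, ∑ b, A a b * B a b

section Helpers

variable {d : ℕ} {x : Fin d → ℝ} {j : Fin d}

lemma pd_add {f g : (Fin d → ℝ) → ℝ} (hf : DifferentiableAt ℝ f x)
    (hg : DifferentiableAt ℝ g x) :
    pd (fun y => f y + g y) j x = pd f j x + pd g j x := by
  simp [pd, fderiv_fun_add hf hg]

lemma pd_sub {f g : (Fin d → ℝ) → ℝ} (hf : DifferentiableAt ℝ f x)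
    (hg : DifferentiableAt ℝ g x) :
    pd (fun y => f y - g y) j x = pd f j x - pd g j x := by
  simp [pd, fderiv_fun_sub hf hg]

lemma pd_mul {f g : (Fin d → ℝ) → ℝ} (hf : DifferentiableAt ℝ f x)
    (hg : DifferentiableAt ℝ g x) :
    pd (fun y => f y * g y) j x = pd f j x * g x + f x * pd g j x := by
  simp [pd, fderiv_fun_mul hf hg]; ring

lemma pd_const_mul {f : (Fin d → ℝ) → ℝ} (c : ℝ) (hf : DifferentiableAt ℝ f x) :
    pd (fun y => c * f y) j x = c * pd f j x := by
  simp [pd, fderiv_const_mul hf c]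

lemma pd_sum {ι : Type*} (t : Finset ι) {f : ι → (Fin d → ℝ) → ℝ}
    (h : ∀ i ∈ t, DifferentiableAt ℝ (f i) x) :
    pd (fun y => ∑ i ∈ t, f i y) j x = ∑ i ∈ t, pd (f i) j x := by
  simp [pd, fderiv_fun_sum h]

lemma comp_contDiffAt {n : WithTop ℕ∞} {s : Set (Fin d → ℝ)} (hs : IsOpen s)
    {v : (Fin d → ℝ) → Fin d → ℝ} (hv : ContDiffOn ℝ n v s) (hx : x ∈ s) (i : Fin d) :
    ContDiffAt ℝ n (fun y => v y i) x :=
  ((ContinuousLinearMap.proj i : ((Fin d → ℝ)) →L[ℝ] ℝ).contDiff.contDiffAt).comp x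
    (hv.contDiffAt (hs.mem_nhds hx))

lemma gradM_diff {s : Set (Fin d → ℝ)} (hs : IsOpen s)
    {v : (Fin d → ℝ) → Fin d → ℝ} (hv : ContDiffOn ℝ 2 v s) (hx : x ∈ s) (i l : Fin d) :
    DifferentiableAt ℝ (fun y => gradM v y i l) x := by
  have h2 : ContDiffAt ℝ 2 (fun y => v y i) x := comp_contDiffAt hs hv hx i
  have h1 : ContDiffAt ℝ 1 (fderiv ℝ (fun y => v y i)) x :=
    h2.fderiv_right (by norm_num)
  exact (h1.differentiableAt one_ne_zero).clm_apply (differentiableAt_const _)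

lemma pd_gradM_symm {s : Set (Fin d → ℝ)} (hs : IsOpen s)
    {v : (Fin d → ℝ) → Fin d → ℝ} (hv : ContDiffOn ℝ 2 v s) (hx : x ∈ s) (i l j : Fin d) :
    pd (fun y => gradM v y i l) j x = pd (fun y => gradM v y i j) l x := by
  set f := fun y => v y i with hf
  have h2 : ContDiffAt ℝ 2 f x := comp_contDiffAt hs hv hx i
  have h1 : ContDiffAt ℝ 1 (fderiv ℝ f) x := h2.fderiv_right (by norm_num)
  have hd1 : DifferentiableAt ℝ (fderiv ℝ f) x := h1.differentiableAt one_ne_zero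
  have hkey : ∀ (a b : Fin d → ℝ),
      fderiv ℝ (fderiv ℝ f) x a b = fderiv ℝ (fderiv ℝ f) x b a := by
    apply second_derivative_symmetric_of_eventually
    · filter_upwards [hs.mem_nhds hx] with y hy
      exact ((comp_contDiffAt hs hv hy i).differentiableAt two_ne_zero).hasFDerivAt
    · exact hd1.hasFDerivAt
  have hcalc : ∀ (a b : Fin d → ℝ),
      fderiv ℝ (fun y => fderiv ℝ f y a) x b = fderiv ℝ (fderiv ℝ f) x b a := by
    intro a b
    rw [fderiv_clm_apply hd1 (differentiableAt_const a)]
    simp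
  show fderiv ℝ (fun y => fderiv ℝ f y (Pi.single l 1)) x (Pi.single j 1)
      = fderiv ℝ (fun y => fderiv ℝ f y (Pi.single j 1)) x (Pi.single l 1)
  rw [hcalc, hcalc, hkey]

end Helpers

lemma nest5 {γ : Type*} [AddCommMonoid γ] {d : ℕ}
    (g : Fin d × Fin d × Fin d × Fin d × Fin d → γ) :
    ∑ t, g t = ∑ a, ∑ b, ∑ c, ∑ p, ∑ q, g (a, b, c, p, q) := by
  simp [Fintype.sum_prod_type]

lemma sum5_swap_a {d : ℕ} (F : Fin d → Fin d → Fin d → Fin d → Fin d → ℝ) :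
    ∑ a, ∑ b, ∑ c, ∑ p, ∑ q, F a b c p q = ∑ c, ∑ p, ∑ q, ∑ b, ∑ a, F a b c p q := by
  rw [← nest5 (fun t => F t.1 t.2.1 t.2.2.1 t.2.2.2.1 t.2.2.2.2),
      ← nest5 (fun t => F t.2.2.2.2 t.2.2.2.1 t.1 t.2.1 t.2.2.1)]
  exact Fintype.sum_equiv ⟨fun t => (t.2.2.1, t.2.2.2.1, t.2.2.2.2, t.2.1, t.1),
    fun t => (t.2.2.2.2, t.2.2.2.1, t.1, t.2.1, t.2.2.1),
    fun _ => rfl, fun _ => rfl⟩ _ _ (fun _ => rfl)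

lemma sum5_swap_b {d : ℕ} (F : Fin d → Fin d → Fin d → Fin d → Fin d → ℝ) :
    ∑ a, ∑ b, ∑ c, ∑ p, ∑ q, F a b c p q = ∑ p, ∑ q, ∑ b, ∑ a, ∑ c, F a b c p q := by
  rw [← nest5 (fun t => F t.1 t.2.1 t.2.2.1 t.2.2.2.1 t.2.2.2.2),
      ← nest5 (fun t => F t.2.2.2.1 t.2.2.1 t.2.2.2.2 t.1 t.2.1)]
  exact Fintype.sum_equiv ⟨fun t => (t.2.2.2.1, t.2.2.2.2, t.2.1, t.1, t.2.2.1),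
    fun t => (t.2.2.2.1, t.2.2.1, t.2.2.2.2, t.1, t.2.1),
    fun _ => rfl, fun _ => rfl⟩ _ _ (fun _ => rfl)

lemma sum3_swap13 {d : ℕ} (F : Fin d → Fin d → Fin d → ℝ) :
    ∑ a, ∑ b, ∑ c, F a b c = ∑ c, ∑ b, ∑ a, F a b c :=
  calc ∑ a, ∑ b, ∑ c, F a b c
      = ∑ a, ∑ c, ∑ b, F a b c := Finset.sum_congr rfl fun _ _ => Finset.sum_comm
    _ = ∑ c, ∑ a, ∑ b, F a b c := Finset.sum_comm
    _ = ∑ c, ∑ b, ∑ a, F a b c := Finset.sum_congr rfl fun _ _ => Finset.sum_comm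
lemma alg {d : ℕ} (C : Fin d → Fin d → Fin d → Fin d → ℝ)
    (hsym2 : ∀ a b c e, C a b c e = C c e a b)
    (gu gw gU : Fin d → Fin d → ℝ) (Ux : Fin d → ℝ)
    (D2u D2w : Fin d → Fin d → Fin d → ℝ)
    (hD2u : ∀ c e j, D2u c e j = D2u c j e) (hD2w : ∀ c e j, D2w c e j = D2w c j e)
    (hdu : ∀ i, ∑ j, ∑ c, ∑ e, C i j c e * D2u c e j = 0)
    (hdw : ∀ i, ∑ j, ∑ c, ∑ e, C i j c e * D2w c e j = 0) :
    ∑ j, ((∑ i, ((∑ l, (gU l j * gw i l + Ux l * D2w i l j)) * (∑ c, ∑ e, C i j c e * gu c e)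
            + (∑ l, Ux l * gw i l) * (∑ c, ∑ e, C i j c e * D2u c e j)))
        + (∑ i, ((∑ l, (gU l j * gu i l + Ux l * D2u i l j)) * (∑ c, ∑ e, C i j c e * gw c e)
            + (∑ l, Ux l * gu i l) * (∑ c, ∑ e, C i j c e * D2w c e j)))
        - ((∑ a, ∑ b, ((∑ c, ∑ e, C a b c e * D2u c e j) * gw a b
              + (∑ c, ∑ e, C a b c e * gu c e) * D2w a b j)) * Ux j
            + (∑ a, ∑ b, (∑ c, ∑ e, C a b c e * gu c e) * gw a b) * gU j j))
      = (∑ i, ∑ j, (∑ c, ∑ e, C i j c e * gu c e) * (∑ l, gw i l * gU l j))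
        + (∑ i, ∑ j, (∑ c, ∑ e, C i j c e * (∑ l, gu c l * gU l e)) * gw i j)
        - (∑ j, gU j j) * (∑ a, ∑ b, (∑ c, ∑ e, C a b c e * gu c e) * gw a b) := by
  have split : ∀ j : Fin d,
      ((∑ i, ((∑ l, (gU l j * gw i l + Ux l * D2w i l j)) * (∑ c, ∑ e, C i j c e * gu c e)
            + (∑ l, Ux l * gw i l) * (∑ c, ∑ e, C i j c e * D2u c e j)))
        + (∑ i, ((∑ l, (gU l j * gu i l + Ux l * D2u i l j)) * (∑ c, ∑ e, C i j c e * gw c e)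
            + (∑ l, Ux l * gu i l) * (∑ c, ∑ e, C i j c e * D2w c e j)))
        - ((∑ a, ∑ b, ((∑ c, ∑ e, C a b c e * D2u c e j) * gw a b
              + (∑ c, ∑ e, C a b c e * gu c e) * D2w a b j)) * Ux j
            + (∑ a, ∑ b, (∑ c, ∑ e, C a b c e * gu c e) * gw a b) * gU j j))
      = (∑ i, (∑ l, gU l j * gw i l) * (∑ c, ∑ e, C i j c e * gu c e))
        + (∑ i, (∑ l, Ux l * D2w i l j) * (∑ c, ∑ e, C i j c e * gu c e))
        + (∑ i, (∑ l, Ux l * gw i l) * (∑ c, ∑ e, C i j c e * D2u c e j))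
        + ((∑ i, (∑ l, gU l j * gu i l) * (∑ c, ∑ e, C i j c e * gw c e))
          + (∑ i, (∑ l, Ux l * D2u i l j) * (∑ c, ∑ e, C i j c e * gw c e))
          + (∑ i, (∑ l, Ux l * gu i l) * (∑ c, ∑ e, C i j c e * D2w c e j)))
        - ((∑ a, ∑ b, (∑ c, ∑ e, C a b c e * D2u c e j) * gw a b) * Ux j
          + (∑ a, ∑ b, (∑ c, ∑ e, C a b c e * gu c e) * D2w a b j) * Ux j
          + (∑ a, ∑ b, (∑ c, ∑ e, C a b c e * gu c e) * gw a b) * gU j j) := by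
    intro j
    simp only [Finset.sum_add_distrib, add_mul]
  rw [Finset.sum_congr rfl fun j _ => split j]
  simp only [Finset.sum_add_distrib, Finset.sum_sub_distrib]
  have hzu : ∑ j, ∑ i, (∑ l, Ux l * gw i l) * (∑ c, ∑ e, C i j c e * D2u c e j) = 0 := by
    rw [Finset.sum_comm]
    calc ∑ i, ∑ j, (∑ l, Ux l * gw i l) * (∑ c, ∑ e, C i j c e * D2u c e j)
        = ∑ i : Fin d, (∑ l, Ux l * gw i l) * ∑ j, ∑ c, ∑ e, C i j c e * D2u c e j :=
          Finset.sum_congr rfl fun i _ => (Finset.mul_sum _ _ _).symm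
      _ = 0 := by simp [hdu]
  have hzw : ∑ j, ∑ i, (∑ l, Ux l * gu i l) * (∑ c, ∑ e, C i j c e * D2w c e j) = 0 := by
    rw [Finset.sum_comm]
    calc ∑ i, ∑ j, (∑ l, Ux l * gu i l) * (∑ c, ∑ e, C i j c e * D2w c e j)
        = ∑ i : Fin d, (∑ l, Ux l * gu i l) * ∑ j, ∑ c, ∑ e, C i j c e * D2w c e j :=
          Finset.sum_congr rfl fun i _ => (Finset.mul_sum _ _ _).symm
      _ = 0 := by simp [hdw]
  have hA2 : ∑ j, ∑ i, (∑ l, Ux l * D2w i l j) * (∑ c, ∑ e, C i j c e * gu c e)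
      = ∑ j, (∑ a, ∑ b, (∑ c, ∑ e, C a b c e * gu c e) * D2w a b j) * Ux j := by
    calc ∑ j, ∑ i, (∑ l, Ux l * D2w i l j) * (∑ c, ∑ e, C i j c e * gu c e)
        = ∑ j, ∑ i, ∑ l, Ux l * D2w i j l * (∑ c, ∑ e, C i j c e * gu c e) := by
          refine Finset.sum_congr rfl fun j _ => Finset.sum_congr rfl fun i _ => ?_
          rw [Finset.sum_mul]
          exact Finset.sum_congr rfl fun l _ => by rw [hD2w]
      _ = ∑ l, ∑ i, ∑ j, Ux l * D2w i j l * (∑ c, ∑ e, C i j c e * gu c e) := sum3_swap13 _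
      _ = ∑ j, (∑ a, ∑ b, (∑ c, ∑ e, C a b c e * gu c e) * D2w a b j) * Ux j := by
          refine Finset.sum_congr rfl fun l _ => ?_
          simp only [Finset.sum_mul, Finset.mul_sum]
          refine Finset.sum_congr rfl fun i _ => Finset.sum_congr rfl fun j _ => ?_
          refine Finset.sum_congr rfl fun c _ => Finset.sum_congr rfl fun e _ => by ring
  have hB2 : ∑ j, ∑ i, (∑ l, Ux l * D2u i l j) * (∑ c, ∑ e, C i j c e * gw c e)
      = ∑ j, (∑ a, ∑ b, (∑ c, ∑ e, C a b c e * D2u c e j) * gw a b) * Ux j := by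
    calc ∑ j, ∑ i, (∑ l, Ux l * D2u i l j) * (∑ c, ∑ e, C i j c e * gw c e)
        = ∑ j, ∑ i, ∑ l, ∑ c, ∑ e, Ux l * D2u i j l * (C c e i j * gw c e) := by
          refine Finset.sum_congr rfl fun j _ => Finset.sum_congr rfl fun i _ => ?_
          rw [Finset.sum_mul]
          refine Finset.sum_congr rfl fun l _ => ?_
          rw [Finset.mul_sum]
          refine Finset.sum_congr rfl fun c _ => ?_
          rw [Finset.mul_sum]
          exact Finset.sum_congr rfl fun e _ => by rw [hD2u, hsym2 i j c e]
      _ = ∑ l, ∑ c, ∑ e, ∑ i, ∑ j, Ux l * D2u i j l * (C c e i j * gw c e) := sum5_swap_a _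
      _ = ∑ j, (∑ a, ∑ b, (∑ c, ∑ e, C a b c e * D2u c e j) * gw a b) * Ux j := by
          refine Finset.sum_congr rfl fun l _ => ?_
          simp only [Finset.sum_mul, Finset.mul_sum]
          refine Finset.sum_congr rfl fun c _ => Finset.sum_congr rfl fun e _ => ?_
          refine Finset.sum_congr rfl fun i _ => Finset.sum_congr rfl fun j _ => by ring
  have hA1 : ∑ j, ∑ i, (∑ l, gU l j * gw i l) * (∑ c, ∑ e, C i j c e * gu c e)
      = ∑ i, ∑ j, (∑ c, ∑ e, C i j c e * gu c e) * (∑ l, gw i l * gU l j) := by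
    rw [Finset.sum_comm]
    refine Finset.sum_congr rfl fun i _ => Finset.sum_congr rfl fun j _ => ?_
    rw [mul_comm]
    congr 1
    exact Finset.sum_congr rfl fun l _ => mul_comm _ _
  have hB1 : ∑ j, ∑ i, (∑ l, gU l j * gu i l) * (∑ c, ∑ e, C i j c e * gw c e)
      = ∑ i, ∑ j, (∑ c, ∑ e, C i j c e * (∑ l, gu c l * gU l e)) * gw i j := by
    calc ∑ j, ∑ i, (∑ l, gU l j * gu i l) * (∑ c, ∑ e, C i j c e * gw c e)
        = ∑ j, ∑ i, ∑ l, ∑ c, ∑ e, gU l j * gu i l * (C c e i j * gw c e) := by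
          refine Finset.sum_congr rfl fun j _ => Finset.sum_congr rfl fun i _ => ?_
          rw [Finset.sum_mul]
          refine Finset.sum_congr rfl fun l _ => ?_
          rw [Finset.mul_sum]
          refine Finset.sum_congr rfl fun c _ => ?_
          rw [Finset.mul_sum]
          exact Finset.sum_congr rfl fun e _ => by rw [hsym2 i j c e]
      _ = ∑ c, ∑ e, ∑ i, ∑ j, ∑ l, gU l j * gu i l * (C c e i j * gw c e) := sum5_swap_b _
      _ = ∑ i, ∑ j, (∑ c, ∑ e, C i j c e * (∑ l, gu c l * gU l e)) * gw i j := by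
          refine Finset.sum_congr rfl fun c _ => Finset.sum_congr rfl fun e _ => ?_
          simp only [Finset.sum_mul, Finset.mul_sum]
          refine Finset.sum_congr rfl fun i _ => Finset.sum_congr rfl fun j _ => ?_
          exact Finset.sum_congr rfl fun l _ => by ring
  have hD : ∑ j, (∑ a, ∑ b, (∑ c, ∑ e, C a b c e * gu c e) * gw a b) * gU j j
      = (∑ j, gU j j) * (∑ a, ∑ b, (∑ c, ∑ e, C a b c e * gu c e) * gw a b) := by
    calc ∑ j, (∑ a, ∑ b, (∑ c, ∑ e, C a b c e * gu c e) * gw a b) * gU j j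
        = ∑ j, gU j j * (∑ a, ∑ b, (∑ c, ∑ e, C a b c e * gu c e) * gw a b) :=
          Finset.sum_congr rfl fun j _ => mul_comm _ _
      _ = _ := (Finset.sum_mul _ _ _).symm
  rw [hzu, hzw, hA1, hA2, hB1, hB2, hD]
  ring

/-- Let `ℂ` be a constant totally symmetric fourth-order tensor, `u, w`
be `C²` vector fields with `div(ℂ∇u) = div(ℂ∇w) = 0` on the open set `s = Ω\Γ`, and `𝒰`
a `C¹` vector field. With
`b = ((𝒰·∇)w)ᵀ ℂ[∇u] + ((𝒰·∇)u)ᵀ ℂ[∇w] − (ℂ[∇u] : ∇w) 𝒰`, one has pointwise on `s`: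
`div b = ℂ[∇u] : (∇w D𝒰) + ℂ[∇u D𝒰] : ∇w − (div 𝒰)(ℂ[∇u] : ∇w)`. -/
theorem stmt_12 {d : ℕ} (s : Set (Fin d → ℝ)) (hs : IsOpen s)
    (C : Fin d → Fin d → Fin d → Fin d → ℝ)
    (hsym1 : ∀ a b c e, C a b c e = C b a c e)
    (hsym2 : ∀ a b c e, C a b c e = C c e a b)
    (u w U : (Fin d → ℝ) → Fin d → ℝ)
    (hu : ContDiffOn ℝ 2 u s) (hw : ContDiffOn ℝ 2 w s) (hU : ContDiffOn ℝ 1 U s)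
    (hdivu : ∀ x ∈ s, ∀ i, ∑ j, pd (fun y => tApply C (gradM u y) i j) j x = 0)
    (hdivw : ∀ x ∈ s, ∀ i, ∑ j, pd (fun y => tApply C (gradM w y) i j) j x = 0) :
    ∀ x ∈ s,
      ∑ j, pd (fun y =>
          (∑ i, (∑ l, U y l * gradM w y i l) * tApply C (gradM u y) i j)
          + (∑ i, (∑ l, U y l * gradM u y i l) * tApply C (gradM w y) i j)
          - mdot (tApply C (gradM u y)) (gradM w y) * U y j) j x
        = mdot (tApply C (gradM u x)) (fun i j => ∑ l, gradM w x i l * gradM U x l j)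
          + mdot (tApply C (fun i j => ∑ l, gradM u x i l * gradM U x l j)) (gradM w x)
          - (∑ j, gradM U x j j) * mdot (tApply C (gradM u x)) (gradM w x) := by
  intro x hx
  -- differentiability facts
  have dU : ∀ l, DifferentiableAt ℝ (fun y => U y l) x := fun l =>
    (comp_contDiffAt hs hU hx l).differentiableAt one_ne_zero
  have dgu : ∀ i l, DifferentiableAt ℝ (fun y => gradM u y i l) x := gradM_diff hs hu hx
  have dgw : ∀ i l, DifferentiableAt ℝ (fun y => gradM w y i l) x := gradM_diff hs hw hx
  have dSu : ∀ i j, DifferentiableAt ℝ (fun y => tApply C (gradM u y) i j) x := fun i j =>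
    DifferentiableAt.fun_sum fun c _ => DifferentiableAt.fun_sum fun e _ => (dgu c e).const_mul _
  have dSw : ∀ i j, DifferentiableAt ℝ (fun y => tApply C (gradM w y) i j) x := fun i j =>
    DifferentiableAt.fun_sum fun c _ => DifferentiableAt.fun_sum fun e _ => (dgw c e).const_mul _
  have dPw : ∀ i, DifferentiableAt ℝ (fun y => ∑ l, U y l * gradM w y i l) x := fun i =>
    DifferentiableAt.fun_sum fun l _ => (dU l).fun_mul (dgw i l)
  have dPu : ∀ i, DifferentiableAt ℝ (fun y => ∑ l, U y l * gradM u y i l) x := fun i =>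
    DifferentiableAt.fun_sum fun l _ => (dU l).fun_mul (dgu i l)
  have dA : ∀ j, DifferentiableAt ℝ
      (fun y => ∑ i, (∑ l, U y l * gradM w y i l) * tApply C (gradM u y) i j) x := fun j =>
    DifferentiableAt.fun_sum fun i _ => (dPw i).fun_mul (dSu i j)
  have dB : ∀ j, DifferentiableAt ℝ
      (fun y => ∑ i, (∑ l, U y l * gradM u y i l) * tApply C (gradM w y) i j) x := fun j =>
    DifferentiableAt.fun_sum fun i _ => (dPu i).fun_mul (dSw i j)
  have dR : DifferentiableAt ℝ (fun y => mdot (tApply C (gradM u y)) (gradM w y)) x :=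
    DifferentiableAt.fun_sum fun a _ => DifferentiableAt.fun_sum fun b _ => (dSu a b).fun_mul (dgw a b)
  -- expansion of the derivative of `ℂ[∇u] i j`
  have pdSu : ∀ i j k, pd (fun y => tApply C (gradM u y) i j) k x
      = ∑ c, ∑ e, C i j c e * pd (fun y => gradM u y c e) k x := by
    intro i j k
    calc pd (fun y => tApply C (gradM u y) i j) k x
        = ∑ c, pd (fun y => ∑ e, C i j c e * gradM u y c e) k x :=
          pd_sum Finset.univ
            (fun c _ => DifferentiableAt.fun_sum fun e _ => (dgu c e).const_mul _)
      _ = _ := Finset.sum_congr rfl fun c _ =>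
          calc pd (fun y => ∑ e, C i j c e * gradM u y c e) k x
              = ∑ e, pd (fun y => C i j c e * gradM u y c e) k x :=
                pd_sum Finset.univ (fun e _ => (dgu c e).const_mul _)
            _ = _ := Finset.sum_congr rfl fun e _ => pd_const_mul _ (dgu c e)
  have pdSw : ∀ i j k, pd (fun y => tApply C (gradM w y) i j) k x
      = ∑ c, ∑ e, C i j c e * pd (fun y => gradM w y c e) k x := by
    intro i j k
    calc pd (fun y => tApply C (gradM w y) i j) k x
        = ∑ c, pd (fun y => ∑ e, C i j c e * gradM w y c e) k x :=
          pd_sum Finset.univ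
            (fun c _ => DifferentiableAt.fun_sum fun e _ => (dgw c e).const_mul _)
      _ = _ := Finset.sum_congr rfl fun c _ =>
          calc pd (fun y => ∑ e, C i j c e * gradM w y c e) k x
              = ∑ e, pd (fun y => C i j c e * gradM w y c e) k x :=
                pd_sum Finset.univ (fun e _ => (dgw c e).const_mul _)
            _ = _ := Finset.sum_congr rfl fun e _ => pd_const_mul _ (dgw c e)
  -- divergence-free conditions in expanded form
  have hdu' : ∀ i, ∑ j, ∑ c, ∑ e, C i j c e * pd (fun y => gradM u y c e) j x = 0 := fun i =>
    calc ∑ j, ∑ c, ∑ e, C i j c e * pd (fun y => gradM u y c e) j x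
        = ∑ j, pd (fun y => tApply C (gradM u y) i j) j x :=
          Finset.sum_congr rfl fun j _ => (pdSu i j j).symm
      _ = 0 := hdivu x hx i
  have hdw' : ∀ i, ∑ j, ∑ c, ∑ e, C i j c e * pd (fun y => gradM w y c e) j x = 0 := fun i =>
    calc ∑ j, ∑ c, ∑ e, C i j c e * pd (fun y => gradM w y c e) j x
        = ∑ j, pd (fun y => tApply C (gradM w y) i j) j x :=
          Finset.sum_congr rfl fun j _ => (pdSw i j j).symm
      _ = 0 := hdivw x hx i
  -- key pointwise computation for each j
  have key : ∀ j, pd (fun y =>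
          (∑ i, (∑ l, U y l * gradM w y i l) * tApply C (gradM u y) i j)
          + (∑ i, (∑ l, U y l * gradM u y i l) * tApply C (gradM w y) i j)
          - mdot (tApply C (gradM u y)) (gradM w y) * U y j) j x
      = (∑ i, ((∑ l, (gradM U x l j * gradM w x i l
                + U x l * pd (fun y => gradM w y i l) j x)) * tApply C (gradM u x) i j
            + (∑ l, U x l * gradM w x i l)
              * (∑ c, ∑ e, C i j c e * pd (fun y => gradM u y c e) j x)))
        + (∑ i, ((∑ l, (gradM U x l j * gradM u x i l
                + U x l * pd (fun y => gradM u y i l) j x)) * tApply C (gradM w x) i j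
            + (∑ l, U x l * gradM u x i l)
              * (∑ c, ∑ e, C i j c e * pd (fun y => gradM w y c e) j x)))
        - ((∑ a, ∑ b, ((∑ c, ∑ e, C a b c e * pd (fun y => gradM u y c e) j x) * gradM w x a b
              + tApply C (gradM u x) a b * pd (fun y => gradM w y a b) j x)) * U x j
            + mdot (tApply C (gradM u x)) (gradM w x) * gradM U x j j) := by
    intro j
    have tPw : ∀ i, pd (fun y => ∑ l, U y l * gradM w y i l) j x
        = ∑ l, (gradM U x l j * gradM w x i l + U x l * pd (fun y => gradM w y i l) j x) :=
      fun i =>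
        calc pd (fun y => ∑ l, U y l * gradM w y i l) j x
            = ∑ l, pd (fun y => U y l * gradM w y i l) j x :=
              pd_sum Finset.univ (fun l _ => (dU l).mul (dgw i l))
          _ = _ := Finset.sum_congr rfl fun l _ => pd_mul (dU l) (dgw i l)
    have tPu : ∀ i, pd (fun y => ∑ l, U y l * gradM u y i l) j x
        = ∑ l, (gradM U x l j * gradM u x i l + U x l * pd (fun y => gradM u y i l) j x) :=
      fun i =>
        calc pd (fun y => ∑ l, U y l * gradM u y i l) j x
            = ∑ l, pd (fun y => U y l * gradM u y i l) j x :=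
              pd_sum Finset.univ (fun l _ => (dU l).mul (dgu i l))
          _ = _ := Finset.sum_congr rfl fun l _ => pd_mul (dU l) (dgu i l)
    have tA : pd (fun y => ∑ i, (∑ l, U y l * gradM w y i l) * tApply C (gradM u y) i j) j x
        = ∑ i, ((∑ l, (gradM U x l j * gradM w x i l
                + U x l * pd (fun y => gradM w y i l) j x)) * tApply C (gradM u x) i j
            + (∑ l, U x l * gradM w x i l)
              * (∑ c, ∑ e, C i j c e * pd (fun y => gradM u y c e) j x)) := by
      calc pd (fun y => ∑ i, (∑ l, U y l * gradM w y i l) * tApply C (gradM u y) i j) j x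
          = ∑ i, pd (fun y => (∑ l, U y l * gradM w y i l) * tApply C (gradM u y) i j) j x :=
            pd_sum Finset.univ (fun i _ => (dPw i).mul (dSu i j))
        _ = _ := by
            refine Finset.sum_congr rfl fun i _ => ?_
            have h2 : pd (fun y => (∑ l, U y l * gradM w y i l) * tApply C (gradM u y) i j) j x
                = pd (fun y => ∑ l, U y l * gradM w y i l) j x * tApply C (gradM u x) i j
                  + (∑ l, U x l * gradM w x i l) * pd (fun y => tApply C (gradM u y) i j) j x :=
              pd_mul (dPw i) (dSu i j)
            rw [h2, tPw i, pdSu i j j]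
    have tB : pd (fun y => ∑ i, (∑ l, U y l * gradM u y i l) * tApply C (gradM w y) i j) j x
        = ∑ i, ((∑ l, (gradM U x l j * gradM u x i l
                + U x l * pd (fun y => gradM u y i l) j x)) * tApply C (gradM w x) i j
            + (∑ l, U x l * gradM u x i l)
              * (∑ c, ∑ e, C i j c e * pd (fun y => gradM w y c e) j x)) := by
      calc pd (fun y => ∑ i, (∑ l, U y l * gradM u y i l) * tApply C (gradM w y) i j) j x
          = ∑ i, pd (fun y => (∑ l, U y l * gradM u y i l) * tApply C (gradM w y) i j) j x :=
            pd_sum Finset.univ (fun i _ => (dPu i).mul (dSw i j))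
        _ = _ := by
            refine Finset.sum_congr rfl fun i _ => ?_
            have h2 : pd (fun y => (∑ l, U y l * gradM u y i l) * tApply C (gradM w y) i j) j x
                = pd (fun y => ∑ l, U y l * gradM u y i l) j x * tApply C (gradM w x) i j
                  + (∑ l, U x l * gradM u x i l) * pd (fun y => tApply C (gradM w y) i j) j x :=
              pd_mul (dPu i) (dSw i j)
            rw [h2, tPu i, pdSw i j j]
    have tR : pd (fun y => mdot (tApply C (gradM u y)) (gradM w y)) j x
        = ∑ a, ∑ b, ((∑ c, ∑ e, C a b c e * pd (fun y => gradM u y c e) j x) * gradM w x a b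
            + tApply C (gradM u x) a b * pd (fun y => gradM w y a b) j x) := by
      calc pd (fun y => mdot (tApply C (gradM u y)) (gradM w y)) j x
          = ∑ a, pd (fun y => ∑ b, tApply C (gradM u y) a b * gradM w y a b) j x :=
            pd_sum Finset.univ
              (fun a _ => DifferentiableAt.fun_sum fun b _ => (dSu a b).fun_mul (dgw a b))
        _ = _ := by
            refine Finset.sum_congr rfl fun a _ => ?_
            calc pd (fun y => ∑ b, tApply C (gradM u y) a b * gradM w y a b) j x
                = ∑ b, pd (fun y => tApply C (gradM u y) a b * gradM w y a b) j x :=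
                  pd_sum Finset.univ (fun b _ => (dSu a b).mul (dgw a b))
              _ = _ := by
                  refine Finset.sum_congr rfl fun b _ => ?_
                  have h2 : pd (fun y => tApply C (gradM u y) a b * gradM w y a b) j x
                      = pd (fun y => tApply C (gradM u y) a b) j x * gradM w x a b
                        + tApply C (gradM u x) a b * pd (fun y => gradM w y a b) j x :=
                    pd_mul (dSu a b) (dgw a b)
                  rw [h2, pdSu a b j]
    have t0 : pd (fun y =>
          (∑ i, (∑ l, U y l * gradM w y i l) * tApply C (gradM u y) i j)
          + (∑ i, (∑ l, U y l * gradM u y i l) * tApply C (gradM w y) i j)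
          - mdot (tApply C (gradM u y)) (gradM w y) * U y j) j x
        = pd (fun y => (∑ i, (∑ l, U y l * gradM w y i l) * tApply C (gradM u y) i j)
            + (∑ i, (∑ l, U y l * gradM u y i l) * tApply C (gradM w y) i j)) j x
          - pd (fun y => mdot (tApply C (gradM u y)) (gradM w y) * U y j) j x :=
      pd_sub ((dA j).add (dB j)) (dR.mul (dU j))
    have t1 : pd (fun y => (∑ i, (∑ l, U y l * gradM w y i l) * tApply C (gradM u y) i j)
            + (∑ i, (∑ l, U y l * gradM u y i l) * tApply C (gradM w y) i j)) j x
        = pd (fun y => ∑ i, (∑ l, U y l * gradM w y i l) * tApply C (gradM u y) i j) j x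
          + pd (fun y => ∑ i, (∑ l, U y l * gradM u y i l) * tApply C (gradM w y) i j) j x :=
      pd_add (dA j) (dB j)
    have t2 : pd (fun y => mdot (tApply C (gradM u y)) (gradM w y) * U y j) j x
        = pd (fun y => mdot (tApply C (gradM u y)) (gradM w y)) j x * U x j
          + mdot (tApply C (gradM u x)) (gradM w x) * pd (fun y => U y j) j x :=
      pd_mul dR (dU j)
    have t3 : pd (fun y => U y j) j x = gradM U x j j := rfl
    rw [t0, t1, t2, t3, tA, tB, tR]
  -- assemble
  calc ∑ j, pd (fun y =>
          (∑ i, (∑ l, U y l * gradM w y i l) * tApply C (gradM u y) i j)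
          + (∑ i, (∑ l, U y l * gradM u y i l) * tApply C (gradM w y) i j)
          - mdot (tApply C (gradM u y)) (gradM w y) * U y j) j x
      = ∑ j, ((∑ i, ((∑ l, (gradM U x l j * gradM w x i l
                + U x l * pd (fun y => gradM w y i l) j x)) * tApply C (gradM u x) i j
            + (∑ l, U x l * gradM w x i l)
              * (∑ c, ∑ e, C i j c e * pd (fun y => gradM u y c e) j x)))
        + (∑ i, ((∑ l, (gradM U x l j * gradM u x i l
                + U x l * pd (fun y => gradM u y i l) j x)) * tApply C (gradM w x) i j
            + (∑ l, U x l * gradM u x i l)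
              * (∑ c, ∑ e, C i j c e * pd (fun y => gradM w y c e) j x)))
        - ((∑ a, ∑ b, ((∑ c, ∑ e, C a b c e * pd (fun y => gradM u y c e) j x) * gradM w x a b
              + tApply C (gradM u x) a b * pd (fun y => gradM w y a b) j x)) * U x j
            + mdot (tApply C (gradM u x)) (gradM w x) * gradM U x j j)) :=
        Finset.sum_congr rfl fun j _ => key j
    _ = mdot (tApply C (gradM u x)) (fun i j => ∑ l, gradM w x i l * gradM U x l j)
          + mdot (tApply C (fun i j => ∑ l, gradM u x i l * gradM U x l j)) (gradM w x)
          - (∑ j, gradM U x j j) * mdot (tApply C (gradM u x)) (gradM w x) :=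
        alg C hsym2 (gradM u x) (gradM w x) (gradM U x) (U x)
          (fun c e k => pd (fun y => gradM u y c e) k x)
          (fun c e k => pd (fun y => gradM w y c e) k x)
          (fun c e k => pd_gradM_symm hs hu hx c e k)
          (fun c e k => pd_gradM_symm hs hw hx c e k) hdu' hdw'
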